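/- Let σ_j be the Pekeris modal parameters as above. For any α ∈ (0,1), sup over 1 ≤ j ≤ ⌊N^α⌋ of |σ_j - jπ| = O(N^{α-1}) as N → ∞. -/
import Mathlib


open Real

lemma stmt_3_aux (X n : ℝ) (hn : n ≠ 0) :
    (2 * π * X) / (π * n / 2) = 4 * (X / n) := by
  have hπ : π ≠ 0 := Real.pi_ne_zero
  field_simp
  ring

set_option maxHeartbeats 1600000 in
/-- Low-index Pekeris modal parameters: for any `α ∈ (0,1)`,
`sup_{1 ≤ j ≤ ⌊N^α⌋} |σ_j - jπ| = O(N^{α-1})` as `N → ∞`. -/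
theorem stmt_3 (c : ℕ → ℝ) (σ : ℕ → ℕ → ℝ)
    (hc : ∀ N : ℕ, c N / π - 1 < (N : ℝ) ∧ (N : ℝ) ≤ c N / π)
    (hσmem : ∀ N : ℕ, ∀ j : ℕ, 1 ≤ j → j ≤ N →
      π / 2 + ((j : ℝ) - 1) * π < σ N j ∧ σ N j < π / 2 + (j : ℝ) * π ∧
        0 < σ N j ∧ σ N j < c N)
    (hσeq : ∀ N : ℕ, ∀ j : ℕ, 1 ≤ j → j ≤ N →
      Real.tan (σ N j) = - σ N j / Real.sqrt ((c N) ^ 2 - (σ N j) ^ 2))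
    (α : ℝ) (hα0 : 0 < α) (hα1 : α < 1) :
    ∃ C : ℝ, ∃ N₀ : ℕ, ∀ N : ℕ, N₀ ≤ N → ∀ j : ℕ,
      1 ≤ j → j ≤ ⌊(N : ℝ) ^ α⌋₊ → j ≤ N →
      |σ N j - (j : ℝ) * π| ≤ C * (N : ℝ) ^ (α - 1) := by
  have hπ : (0 : ℝ) < π := Real.pi_pos
  -- eventual smallness of N^(α-1)
  have htend : Filter.Tendsto (fun N : ℕ => (N : ℝ) ^ (α - 1)) Filter.atTop (nhds 0) := by
    have h : Filter.Tendsto (fun N : ℕ => (N : ℝ) ^ (-(1 - α))) Filter.atTop (nhds 0) :=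
      (tendsto_rpow_neg_atTop (show 0 < 1 - α by linarith)).comp tendsto_natCast_atTop_atTop
    have he : (fun N : ℕ => (N : ℝ) ^ (-(1 - α))) = fun N : ℕ => (N : ℝ) ^ (α - 1) := by
      funext N; ring_nf
    rwa [he] at h
  have hev : ∀ᶠ N : ℕ in Filter.atTop, (N : ℝ) ^ (α - 1) < 1 / 4 :=
    htend.eventually (eventually_lt_nhds (by norm_num))
  obtain ⟨N₁, hN₁⟩ := Filter.eventually_atTop.mp hev
  refine ⟨4, max N₁ 2, fun N hN j hj1 hjα hjN => ?_⟩
  have hN2 : (2 : ℕ) ≤ N := le_trans (le_max_right _ _) hN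
  have hN2' : (2 : ℝ) ≤ (N : ℝ) := by exact_mod_cast hN2
  have hN0 : (0 : ℝ) < (N : ℝ) := by linarith
  have hsmall : (N : ℝ) ^ (α - 1) < 1 / 4 := hN₁ N (le_trans (le_max_left _ _) hN)
  -- j ≤ N^α
  have hjNα : (j : ℝ) ≤ (N : ℝ) ^ α := by
    calc (j : ℝ) ≤ (⌊(N : ℝ) ^ α⌋₊ : ℝ) := by exact_mod_cast hjα
    _ ≤ (N : ℝ) ^ α := Nat.floor_le (Real.rpow_nonneg hN0.le α)
  have hNα1 : (1 : ℝ) ≤ (N : ℝ) ^ α := by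
    have hj' : (1 : ℝ) ≤ (j : ℝ) := by exact_mod_cast hj1
    linarith
  -- N^α = N^(α-1) * N
  have hpow : (N : ℝ) ^ (α - 1) = (N : ℝ) ^ α / (N : ℝ) :=
    Real.rpow_sub_one hN0.ne' α
  have hNαN : (N : ℝ) ^ α < (N : ℝ) / 4 := by
    have := (div_lt_iff₀ hN0).mp (hpow ▸ hsmall)
    linarith
  obtain ⟨h1, h2, h3, h4⟩ := hσmem N j hj1 hjN
  set s := σ N j with hs
  -- c N bound
  have hcN : π * (N : ℝ) ≤ c N := by
    have := (hc N).2
    calc π * (N : ℝ) ≤ π * (c N / π) := by nlinarith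
    _ = c N := by field_simp
  -- upper bound on s
  have hsub : s < π * (N : ℝ) / 2 := by
    have : s < π / 2 + (N : ℝ) ^ α * π := by nlinarith
    nlinarith
  have hs2 : s ^ 2 < (π * (N : ℝ) / 2) ^ 2 := by nlinarith
  have hcs : (π * (N : ℝ) / 2) ^ 2 ≤ c N ^ 2 - s ^ 2 := by nlinarith
  have hsqrtpos : π * (N : ℝ) / 2 ≤ Real.sqrt (c N ^ 2 - s ^ 2) := by
    have h' : π * (N : ℝ) / 2 = Real.sqrt ((π * (N : ℝ) / 2) ^ 2) := by
      rw [Real.sqrt_sq (by positivity)]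
    rw [h']
    exact Real.sqrt_le_sqrt hcs
  have hsqrt0 : (0 : ℝ) < Real.sqrt (c N ^ 2 - s ^ 2) :=
    lt_of_lt_of_le (by positivity) hsqrtpos
  -- tan s < 0
  have htan : Real.tan s = -s / Real.sqrt (c N ^ 2 - s ^ 2) := hσeq N j hj1 hjN
  have htanneg : Real.tan s < 0 := by
    rw [htan]
    exact div_neg_of_neg_of_pos (by linarith) hsqrt0
  -- t = s - jπ
  set t := s - (j : ℝ) * π with ht
  have htper : Real.tan t = Real.tan s := Real.tan_periodic.sub_nat_mul_eq j
  have ht2 : t < π / 2 := by rw [ht]; linarith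
  have ht1 : -(π / 2) < t := by rw [ht]; linarith
  have htanneg' : Real.tan t < 0 := by rw [htper]; exact htanneg
  have htneg : t < 0 := by
    by_contra h
    push_neg at h
    rcases eq_or_lt_of_le h with h | h
    · rw [← h, Real.tan_zero] at htanneg'; linarith
    · have := Real.tan_pos_of_pos_of_lt_pi_div_two h ht2
      linarith
  -- δ = -t satisfies δ < tan δ
  have hδtan : -t < Real.tan (-t) := Real.lt_tan (by linarith) (by linarith)
  have htanδ : Real.tan (-t) = s / Real.sqrt (c N ^ 2 - s ^ 2) := by
    rw [Real.tan_neg, htper, htan]; ring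
  -- final bound
  have hbound : s / Real.sqrt (c N ^ 2 - s ^ 2) ≤ (2 * π * (N : ℝ) ^ α) / (π * (N : ℝ) / 2) := by
    apply div_le_div₀ (by positivity) ?_ (by positivity) hsqrtpos
    have ha : (j : ℝ) * π ≤ (N : ℝ) ^ α * π := mul_le_mul_of_nonneg_right hjNα hπ.le
    have hb : π ≤ π * (N : ℝ) ^ α := le_mul_of_one_le_right hπ.le hNα1
    linarith
  have hval : (2 * π * (N : ℝ) ^ α) / (π * (N : ℝ) / 2) = 4 * (N : ℝ) ^ (α - 1) := by
    rw [hpow]; exact stmt_3_aux _ _ hN0.ne'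
  have habs : |s - (j : ℝ) * π| = -t := by
    rw [abs_of_neg (by rw [← ht]; linarith), ht]
  rw [habs]
  have hfin : -t < 4 * (N : ℝ) ^ (α - 1) := by
    calc -t < Real.tan (-t) := hδtan
    _ = s / Real.sqrt (c N ^ 2 - s ^ 2) := htanδ
    _ ≤ (2 * π * (N : ℝ) ^ α) / (π * (N : ℝ) / 2) := hbound
    _ = 4 * (N : ℝ) ^ (α - 1) := hval
  linarith
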